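/- Let m be a positive integer and p a prime not dividing m. Then, in ZMod p, the sum over k from 1 to p-1 of B_k · ((-m)⁻¹)^k equals (-1)^(m-1) · D_{m-1}; equivalently, ∑_{0<k<p} B_k/(-m)^k ≡ (-1)^(m-1) D_{m-1} (mod p). -/

import Mathlib

open Finset

/-- Stirling numbers of the second kind. -/
def stirling : ℕ → ℕ → ℕ
  | 0, 0 => 1
  | 0, _+1 => 0
  | _+1, 0 => 0
  | k+1, j+1 => (j+1) * stirling k (j+1) + stirling k j

@[simp] lemma stirling_zero_zero : stirling 0 0 = 1 := rfl
@[simp] lemma stirling_zero_succ (j : ℕ) : stirling 0 (j+1) = 0 := rfl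
@[simp] lemma stirling_succ_zero (k : ℕ) : stirling (k+1) 0 = 0 := rfl
lemma stirling_succ_succ (k j : ℕ) :
    stirling (k+1) (j+1) = (j+1) * stirling k (j+1) + stirling k j := rfl

lemma stirling_eq_zero_of_lt : ∀ {k j : ℕ}, k < j → stirling k j = 0 := by
  intro k
  induction k with
  | zero => intro j hj; match j, hj with | j+1, _ => rfl
  | succ k ih =>
    intro j hj
    match j, hj with
    | j+1, hj =>
      rw [stirling_succ_succ, ih (by omega), ih (by omega)]; simp

lemma stirling_succ_one (k : ℕ) : stirling (k+1) 1 = 1 := by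
  induction k with
  | zero => rfl
  | succ k ih => rw [stirling_succ_succ, ih]; simp

lemma stirling_binomial (n j : ℕ) :
    stirling (n+1) (j+1) = ∑ i ∈ range (n+1), n.choose i * stirling i j := by
  induction n generalizing j with
  | zero =>
    cases j with
    | zero => rfl
    | succ t => simp [stirling_succ_succ]
  | succ n ih =>
    cases j with
    | zero =>
      rw [stirling_succ_one]
      rw [Finset.sum_eq_single 0]
      · simp
      · intro i hi hne
        match i, hne with
        | i+1, _ => simp
      · simp
    | succ t =>
      have key : ∀ i, Nat.choose (n+1) i * stirling i (t+1) =
          n.choose i * stirling i (t+1) + (if i = 0 then 0 else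
            n.choose (i-1) * stirling i (t+1)) := by
        intro i
        cases i with
        | zero => simp
        | succ i => simp [Nat.choose_succ_succ, add_mul, add_comm]
      rw [Finset.sum_congr rfl (fun i _ => key i), Finset.sum_add_distrib]
      have h1 : ∑ i ∈ range (n+2), n.choose i * stirling i (t+1)
          = stirling (n+1) (t+2) := by
        rw [Finset.sum_range_succ, Nat.choose_succ_self, zero_mul, add_zero, ih]
      have h2 : ∑ i ∈ range (n+2), (if i = 0 then 0 else
            n.choose (i-1) * stirling i (t+1))
          = (t+1) * stirling (n+1) (t+2) + stirling (n+1) (t+1) := by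
        rw [Finset.sum_range_succ' _ (n+1)]
        simp only [if_neg (Nat.succ_ne_zero _), if_pos rfl, add_zero,
          Nat.add_sub_cancel]
        have : ∀ i, n.choose i * stirling (i+1) (t+1)
            = (t+1) * (n.choose i * stirling i (t+1)) + n.choose i * stirling i t := by
          intro i; rw [stirling_succ_succ]; ring
        rw [Finset.sum_congr rfl (fun i _ => this i), Finset.sum_add_distrib,
          ← Finset.mul_sum, ← ih, ← ih]; simp
      rw [h1, h2, stirling_succ_succ, stirling_succ_succ]
      ring

/-- The Bell numbers: `bell n` is the number of partitions of an `n`-element set,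
determined by `bell 0 = 1` and `bell (n+1) = ∑_{k=0}^{n} C(n,k) * bell k`. -/
def bell : ℕ → ℕ
  | 0 => 1
  | n + 1 => ∑ k ∈ (Finset.range (n + 1)).attach, n.choose k * bell k
decreasing_by exact Finset.mem_range.mp k.2


lemma bell_succ (n : ℕ) : bell (n+1) = ∑ k ∈ range (n+1), n.choose k * bell k := by
  rw [bell, ← Finset.sum_attach (range (n+1)) (fun k => n.choose k * bell k)]

lemma bell_eq_sum_stirling (n : ℕ) : bell n = ∑ j ∈ range (n+1), stirling n j := by
  induction n using Nat.strong_induction_on with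
  | _ n ih =>
    cases n with
    | zero => simp [bell, stirling_zero_zero]
    | succ n =>
      rw [bell_succ]
      have h1 : ∀ k ∈ range (n+1), n.choose k * bell k
          = ∑ j ∈ range (n+1), n.choose k * stirling k j := by
        intro k hk
        rw [ih k (Finset.mem_range.mp hk), Finset.mul_sum]
        rw [← Finset.sum_subset (Finset.range_subset_range.mpr
          (Nat.succ_le_succ (Nat.le_of_lt_succ (Finset.mem_range.mp hk))))]
        intro j hj hj2
        rw [stirling_eq_zero_of_lt (by simp at hj2 ⊢; omega), mul_zero]
      rw [Finset.sum_congr rfl h1, Finset.sum_comm]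
      rw [Finset.sum_congr rfl (fun j _ => (stirling_binomial n j).symm)]
      rw [Finset.sum_range_succ' _ (n+1), stirling_succ_zero, add_zero]


lemma neg_one_pow_sub_succ {i t : ℕ} (h : i ≤ t) :
    (-1:ℤ)^(t+1-i) = -(-1:ℤ)^(t-i) := by
  have : t+1-i = (t-i)+1 := by omega
  rw [this, pow_succ]; ring

/-- Claim B -/
lemma alt_sum_shift (k t : ℕ) :
    ∑ i ∈ range (t+1), (-1:ℤ)^(t-i) * (t.choose i) * ((i:ℤ)+1)^k
      = (∑ i ∈ range (t+2), (-1:ℤ)^(t+1-i) * ((t+1).choose i) * (i:ℤ)^k)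
        + ∑ i ∈ range (t+1), (-1:ℤ)^(t-i) * (t.choose i) * (i:ℤ)^k := by
  have h1 : ∑ i ∈ range (t+2), (-1:ℤ)^(t+1-i) * ((t+1).choose i) * (i:ℤ)^k
      = (∑ i ∈ range (t+1), (-1:ℤ)^(t-i) * ((t+1).choose (i+1)) * ((i:ℤ)+1)^k)
        + (-1:ℤ)^(t+1) * (0:ℤ)^k := by
    rw [Finset.sum_range_succ' _ (t+1)]
    simp only [Nat.choose_zero_right, Nat.cast_one, Nat.sub_zero, Nat.cast_zero, mul_one]
    congr 1
    refine Finset.sum_congr rfl fun i hi => ?_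
    have hi' : i ≤ t := by simpa [Nat.lt_succ_iff] using hi
    have h2 : t + 1 - (i+1) = t - i := by omega
    rw [h2]
    push_cast
    ring
  rw [h1]
  have h3 : ∀ i ∈ range (t+1), (-1:ℤ)^(t-i) * ((t+1).choose (i+1)) * ((i:ℤ)+1)^k
      = (-1:ℤ)^(t-i) * (t.choose i) * ((i:ℤ)+1)^k
        + (-1:ℤ)^(t-i) * (t.choose (i+1)) * ((i:ℤ)+1)^k := by
    intro i _
    rw [Nat.choose_succ_succ]
    push_cast
    ring
  rw [Finset.sum_congr rfl h3, Finset.sum_add_distrib]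
  have h4 : (∑ i ∈ range (t+1), (-1:ℤ)^(t-i) * (t.choose (i+1)) * ((i:ℤ)+1)^k)
        + (-1:ℤ)^(t+1) * (0:ℤ)^k
      = ∑ i ∈ range (t+2), (-1:ℤ)^(t+1-i) * (t.choose i) * (i:ℤ)^k := by
    rw [Finset.sum_range_succ' (fun i => (-1:ℤ)^(t+1-i) * (t.choose i) * (i:ℤ)^k) (t+1)]
    simp only [Nat.choose_zero_right, Nat.cast_one, Nat.sub_zero, Nat.cast_zero, mul_one]
    congr 1
    refine Finset.sum_congr rfl fun i hi => ?_
    have h2 : t + 1 - (i+1) = t - i := by omega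
    rw [h2]
    push_cast
    ring
  have h5 : ∑ i ∈ range (t+2), (-1:ℤ)^(t+1-i) * (t.choose i) * (i:ℤ)^k
      = -∑ i ∈ range (t+1), (-1:ℤ)^(t-i) * (t.choose i) * (i:ℤ)^k := by
    rw [Finset.sum_range_succ, Nat.choose_succ_self, Nat.cast_zero, mul_zero, zero_mul,
      add_zero, ← Finset.sum_neg_distrib]
    refine Finset.sum_congr rfl fun i hi => ?_
    rw [neg_one_pow_sub_succ (by simpa [Nat.lt_succ_iff] using hi)]
    ring
  have := h4.trans h5
  linarith [this]

lemma stirling_formula : ∀ (k j : ℕ), (j.factorial : ℤ) * stirling k j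
    = ∑ i ∈ range (j+1), (-1:ℤ)^(j-i) * (j.choose i) * (i:ℤ)^k := by
  intro k
  induction k with
  | zero =>
    intro j
    have h0 : ∑ i ∈ range (j+1), (-1:ℤ)^(j-i) * (j.choose i) * (i:ℤ)^0
        = ∑ i ∈ range (j+1), (-1:ℤ)^i * (j.choose i) := by
      rw [← Finset.sum_range_reflect (fun i => (-1:ℤ)^(j-i) * (j.choose i) * (i:ℤ)^0) (j+1)]
      refine Finset.sum_congr rfl fun i hi => ?_
      have hi' : i ≤ j := by simpa [Nat.lt_succ_iff] using hi
      have e1 : j + 1 - 1 - i = j - i := by omega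
      have e2 : j - (j - i) = i := by omega
      rw [e1, e2, pow_zero, mul_one, Nat.choose_symm hi']
    rw [h0, Int.alternating_sum_range_choose]
    cases j with
    | zero => simp [stirling_zero_zero]
    | succ t => simp [stirling_zero_succ]
  | succ k ih =>
    intro j
    cases j with
    | zero => simp [stirling_succ_zero]
    | succ t =>
      have claimA : ∑ i ∈ range (t+2), (-1:ℤ)^(t+1-i) * ((t+1).choose i) * (i:ℤ)^(k+1)
          = (t+1) * ∑ i ∈ range (t+1), (-1:ℤ)^(t-i) * (t.choose i) * ((i:ℤ)+1)^k := by
        rw [Finset.sum_range_succ'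
          (fun i => (-1:ℤ)^(t+1-i) * ((t+1).choose i) * (i:ℤ)^(k+1)) (t+1)]
        simp only [Nat.cast_zero, zero_pow (Nat.succ_ne_zero k), mul_zero, add_zero]
        rw [Finset.mul_sum]
        refine Finset.sum_congr rfl fun i hi => ?_
        have e2 : t + 1 - (i+1) = t - i := by omega
        have e3 : (((t+1).choose (i+1) : ℤ)) * ((i:ℤ)+1) = (t+1) * (t.choose i) := by
          have := Nat.add_one_mul_choose_eq t i
          have : ((t+1) * t.choose i : ℕ) = ((t+1).choose (i+1) * (i+1) : ℕ) := this
          exact_mod_cast (congrArg (fun x : ℕ => (x:ℤ)) this).symm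
        have e4 : ((i:ℤ)+1)^(k+1) = ((i:ℤ)+1) * ((i:ℤ)+1)^k := by ring
        push_cast [e2]
        push_cast at e3
        calc (-1:ℤ)^(t-i) * ((t+1).choose (i+1)) * ((i:ℤ)+1)^(k+1)
            = (-1:ℤ)^(t-i) * (((t+1).choose (i+1) : ℤ) * ((i:ℤ)+1)) * ((i:ℤ)+1)^k := by
              rw [e4]; ring
          _ = (t+1) * ((-1:ℤ)^(t-i) * (t.choose i) * ((i:ℤ)+1)^k) := by rw [e3]; ring
      rw [claimA, alt_sum_shift, ← ih, ← ih, stirling_succ_succ]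
      push_cast [Nat.factorial_succ]
      ring



section ZModLemmas
variable {p : ℕ} [hp : Fact p.Prime]

lemma fact_ne_zero_zmod {j : ℕ} (hj : j < p) : ((j.factorial : ZMod p)) ≠ 0 := by
  rw [Ne, ZMod.natCast_eq_zero_iff]
  intro h
  exact absurd (hp.out.dvd_factorial.mp h) (by omega)

lemma geom_sum_zmod (t : ZMod p) :
    ∑ k ∈ Finset.Icc 1 (p-1), t^k = if t = 1 then -1 else 0 := by
  have hp2 : 2 ≤ p := hp.out.two_le
  have hIcc : Finset.Icc 1 (p-1) = Finset.Ico 1 p := by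
    rw [← Finset.Ico_add_one_right_eq_Icc]
    congr 1
    omega
  have hsplit : ∑ k ∈ Finset.range p, t^k = t^0 + ∑ k ∈ Finset.Icc 1 (p-1), t^k := by
    rw [hIcc, Finset.range_eq_Ico, Finset.sum_eq_sum_Ico_succ_bot (by omega : 0 < p)]
  by_cases ht : t = 1
  · subst ht
    simp only [if_pos rfl, one_pow]
    rw [Finset.sum_const, Nat.card_Icc]
    simp only [nsmul_eq_mul, mul_one]
    have : ((p - 1 + 1 - 1 : ℕ) : ZMod p) = ((p-1 : ℕ) : ZMod p) := by norm_num
    rw [this, Nat.cast_sub (by omega), ZMod.natCast_self]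
    norm_num
  · rw [if_neg ht]
    have h1 : ∑ k ∈ Finset.range p, t^k = 1 := by
      rw [geom_sum_eq ht, ZMod.pow_card]
      rw [div_eq_one_iff_eq (sub_ne_zero.mpr ht)]
    have := hsplit.symm.trans h1
    rw [pow_zero] at this
    linear_combination this

lemma fact_mul_fact_zmod : ∀ n : ℕ, n ≤ p - 1 →
    (((p-1-n).factorial : ZMod p)) * ((n.factorial : ZMod p)) = (-1)^(n+1) := by
  intro n
  induction n with
  | zero => intro _; simpa using ZMod.wilsons_lemma p
  | succ n ih =>
    intro hn
    have hn' : n ≤ p - 1 := by omega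
    have hp2 : 2 ≤ p := hp.out.two_le
    have hc : ((p-1-n : ℕ) : ZMod p) ≠ 0 := by
      rw [Ne, ZMod.natCast_eq_zero_iff]
      intro h
      have := Nat.le_of_dvd (by omega) h
      omega
    apply mul_left_cancel₀ hc
    have e1 : p - 1 - n = (p - 1 - (n+1)) + 1 := by omega
    have e2 : ((n+1 : ℕ) : ZMod p) = -((p-1-n : ℕ) : ZMod p) := by
      have : ((n+1) + (p-1-n) : ℕ) = p := by omega
      have h0 : (((n+1) + (p-1-n) : ℕ) : ZMod p) = 0 := by rw [this, ZMod.natCast_self]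
      push_cast at h0 ⊢
      linear_combination h0
    have ih' := ih hn'
    rw [e1] at ih'
    rw [Nat.factorial_succ] at ih'
    push_cast at ih'
    calc ((p-1-n : ℕ) : ZMod p) * (((p-1-(n+1)).factorial : ZMod p) * ((n+1).factorial : ZMod p))
        = ((n+1 : ℕ) : ZMod p) * ((((p-1-(n+1)) + 1 : ℕ) : ZMod p) *
            ((p-1-(n+1)).factorial : ZMod p) * (n.factorial : ZMod p)) := by
          rw [Nat.factorial_succ]
          push_cast [e1]
          ring
      _ = ((n+1 : ℕ) : ZMod p) * (-1)^(n+1) := by rw [← ih']; push_cast; ring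
      _ = ((p-1-n : ℕ) : ZMod p) * (-1)^(n+1+1) := by rw [e2]; push_cast; ring

lemma derangement_sum_zmod {n : ℕ} (hn : n < p) :
    (n.factorial : ZMod p) * ∑ r ∈ Finset.range (n+1), (-1)^r * ((r.factorial : ZMod p))⁻¹
      = (numDerangements n : ZMod p) := by
  have h := numDerangements_sum n
  have hcast : ((numDerangements n : ℤ) : ZMod p) = (numDerangements n : ZMod p) := by
    push_cast; ring
  rw [← hcast, h]
  push_cast
  rw [Finset.mul_sum]
  refine Finset.sum_congr rfl fun r hr => ?_
  have hr' : r ≤ n := by simpa [Nat.lt_succ_iff] using hr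
  have hfact : (r.factorial * (r+1).ascFactorial (n-r) : ℕ) = n.factorial := by
    rw [Nat.factorial_mul_ascFactorial]
    congr 1
    omega
  have : (n.factorial : ZMod p) = (r.factorial : ZMod p) * ((r+1).ascFactorial (n-r) : ZMod p) := by
    rw [← Nat.cast_mul, hfact]
  rw [this]
  have hrne := fact_ne_zero_zmod (p := p) (by omega : r < p)
  field_simp

end ZModLemmas


section Per
variable {p : ℕ} [hp : Fact p.Prime]

lemma numDerangements_succ_zmod (n : ℕ) :
    (numDerangements (n+1) : ZMod p) = ((n : ZMod p)+1) * (numDerangements n : ZMod p) - (-1)^n := by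
  have h := numDerangements_succ n
  have := congrArg (fun z : ℤ => (z : ZMod p)) h
  push_cast at this
  convert this using 2

lemma neg_pow_derangements_add_p (n : ℕ) :
    ((-1 : ZMod p))^(n+p) * (numDerangements (n+p) : ZMod p)
      = (-1)^n * (numDerangements n : ZMod p) := by
  induction n with
  | zero =>
    have hp2 := hp.out.two_le
    obtain ⟨q, hq⟩ : ∃ q, p = q + 1 := ⟨p-1, by omega⟩
    have hD : (numDerangements p : ZMod p) = -(-1:ZMod p)^q := by
      rw [show numDerangements p = numDerangements (q+1) by rw [← hq],
        numDerangements_succ_zmod q]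
      have h0 : ((q : ZMod p) + 1) = 0 := by
        rw [show ((q:ZMod p)+1) = ((q+1 : ℕ) : ZMod p) by push_cast; ring, ← hq,
          ZMod.natCast_self]
      rw [h0, zero_mul, zero_sub]
    have hpow : ((-1:ZMod p))^p = (-1)^(q+1) := by rw [← hq]
    have h1 : ((-1:ZMod p))^q * (-1)^q = 1 := by
      rw [← pow_add, ← two_mul, pow_mul]; norm_num
    rw [zero_add, hD, numDerangements_zero, hpow]
    push_cast
    linear_combination h1
  | succ n ih =>
    have e : n + 1 + p = (n + p) + 1 := by omega
    rw [e, numDerangements_succ_zmod (n+p), numDerangements_succ_zmod n]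
    have h0 : ((p:ℕ) : ZMod p) = 0 := ZMod.natCast_self p
    have h1 : ((-1:ZMod p))^(n+p) * (-1)^(n+p) = 1 := by
      rw [← pow_add]
      rw [show (n+p)+(n+p) = 2*(n+p) by ring, pow_mul]; norm_num
    have h2 : ((-1:ZMod p))^n * (-1)^n = 1 := by
      rw [← pow_add, ← two_mul, pow_mul]; norm_num
    push_cast
    linear_combination (-((n:ZMod p) + (p:ZMod p) + 1)) * ih + h1 - h2
      + (-(numDerangements n : ZMod p) * (-1:ZMod p)^n) * h0

lemma neg_pow_derangements_mod (n : ℕ) :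
    ((-1 : ZMod p))^n * (numDerangements n : ZMod p)
      = (-1)^(n % p) * (numDerangements (n % p) : ZMod p) := by
  conv_lhs => rw [show n = p*(n/p) + n%p from (Nat.div_add_mod n p).symm]
  induction n / p with
  | zero => simp
  | succ c ih =>
    have e : p*(c+1) + n%p = (p*c + n%p) + p := by ring
    rw [e, neg_pow_derangements_add_p, ih]

end Per

theorem bell_sum_eq_derangement (m : ℕ) (hm : 0 < m) (p : ℕ) (hp : p.Prime)
    (hpm : ¬ p ∣ m) :
    ∑ k ∈ Finset.Icc 1 (p - 1), (bell k : ZMod p) * ((-(m : ZMod p))⁻¹) ^ k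
      = (-1) ^ (m - 1) * (numDerangements (m - 1) : ZMod p) := by
  haveI : Fact p.Prime := ⟨hp⟩
  have hp2 : 2 ≤ p := hp.two_le
  set x : ZMod p := (-(m : ZMod p))⁻¹ with hxdef
  set M := m % p with hMdef
  have hM1 : 1 ≤ M := by
    rcases Nat.eq_zero_or_pos M with h | h
    · exact absurd (Nat.dvd_of_mod_eq_zero h) hpm
    · omega
  have hMp : M < p := Nat.mod_lt m (by omega)
  set i0 := p - M with hi0def
  set n := M - 1 with hndef
  have hi0n : i0 + n = p - 1 := by omega
  have hi01 : 1 ≤ i0 := by omega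
  have hm0 : (m : ZMod p) ≠ 0 := by
    rw [Ne, ZMod.natCast_eq_zero_iff]; exact hpm
  have hmneg : -(m : ZMod p) ≠ 0 := neg_ne_zero.mpr hm0
  have hx0 : x ≠ 0 := inv_ne_zero hmneg
  have hxinv : x⁻¹ = -(m : ZMod p) := by rw [hxdef, inv_inv]
  have hi0cast : ((i0 : ℕ) : ZMod p) = -(m : ZMod p) := by
    have h1 : ((i0 + M : ℕ) : ZMod p) = 0 := by
      rw [show i0 + M = p by omega, ZMod.natCast_self]
    have h2 : ((M : ℕ) : ZMod p) = (m : ZMod p) := by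
      rw [hMdef]; exact ZMod.natCast_mod m p
    push_cast at h1
    linear_combination h1 - h2
  have step1 : ∑ k ∈ Finset.Icc 1 (p - 1), (bell k : ZMod p) * x ^ k
      = ∑ j ∈ Finset.range p, ∑ k ∈ Finset.Icc 1 (p-1), (stirling k j : ZMod p) * x ^ k := by
    rw [Finset.sum_comm]
    refine Finset.sum_congr rfl fun k hk => ?_
    have hk' : k ≤ p - 1 := (Finset.mem_Icc.mp hk).2
    rw [← Finset.sum_mul]
    congr 1
    rw [bell_eq_sum_stirling k, Nat.cast_sum]
    exact Finset.sum_subset (Finset.range_subset_range.mpr (by omega))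
      (fun j _ hj => by
        rw [stirling_eq_zero_of_lt (by simp only [Finset.mem_range] at hj; omega),
          Nat.cast_zero])
  have hcond : ∀ i < p, (((i:ℕ) : ZMod p) * x = 1 ↔ i = i0) := by
    intro i hi
    constructor
    · intro h
      have h3 : ((i:ℕ) : ZMod p) = x⁻¹ := eq_inv_of_mul_eq_one_left h
      rw [hxinv, ← hi0cast] at h3
      have h4 := congrArg ZMod.val h3
      rwa [ZMod.val_cast_of_lt hi, ZMod.val_cast_of_lt (by omega)] at h4
    · rintro rfl
      rw [hi0cast, hxdef]
      exact mul_inv_cancel₀ hmneg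
  have step2 : ∀ j < p, ∑ k ∈ Finset.Icc 1 (p-1), (stirling k j : ZMod p) * x ^ k
      = if i0 ≤ j then
          -((j.factorial : ZMod p)⁻¹ * (-1)^(j - i0) * (j.choose i0 : ZMod p)) else 0 := by
    intro j hj
    have hfj : (j.factorial : ZMod p) ≠ 0 := fact_ne_zero_zmod hj
    have hS : ∀ k, (stirling k j : ZMod p)
        = (j.factorial : ZMod p)⁻¹ * ∑ i ∈ Finset.range (j+1),
            (-1:ZMod p)^(j-i) * (j.choose i : ZMod p) * ((i:ℕ) : ZMod p)^k := by
      intro k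
      have h := congrArg (fun z : ℤ => (z : ZMod p)) (stirling_formula k j)
      push_cast at h
      field_simp
      linear_combination h
    calc ∑ k ∈ Finset.Icc 1 (p-1), (stirling k j : ZMod p) * x ^ k
        = (j.factorial : ZMod p)⁻¹ * ∑ i ∈ Finset.range (j+1),
            (-1:ZMod p)^(j-i) * (j.choose i : ZMod p)
              * ∑ k ∈ Finset.Icc 1 (p-1), (((i:ℕ):ZMod p) * x)^k := by
          have hsw : ∀ k ∈ Finset.Icc 1 (p-1), (stirling k j : ZMod p) * x^k
              = ∑ i ∈ Finset.range (j+1), (j.factorial : ZMod p)⁻¹ *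
                  ((-1:ZMod p)^(j-i) * (j.choose i : ZMod p) * (((i:ℕ):ZMod p)*x)^k) := by
            intro k _
            rw [hS k, Finset.mul_sum, Finset.sum_mul]
            exact Finset.sum_congr rfl fun i _ => by rw [mul_pow]; ring
          rw [Finset.sum_congr rfl hsw, Finset.sum_comm, Finset.mul_sum]
          exact Finset.sum_congr rfl fun i _ => by
            rw [Finset.mul_sum, Finset.mul_sum]
      _ = (j.factorial : ZMod p)⁻¹ * ∑ i ∈ Finset.range (j+1),
            (if i = i0 then -((-1:ZMod p)^(j-i) * (j.choose i : ZMod p)) else 0) := by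
          congr 1
          refine Finset.sum_congr rfl fun i hi => ?_
          have hip : i < p := by simp only [Finset.mem_range] at hi; omega
          rw [geom_sum_zmod]
          by_cases h : i = i0
          · rw [if_pos ((hcond i hip).mpr h), if_pos h]; ring
          · rw [if_neg (fun hh => h ((hcond i hip).mp hh)), if_neg h]; ring
      _ = _ := by
          rw [Finset.sum_ite_eq' (Finset.range (j+1)) i0
            (fun i => -((-1:ZMod p)^(j-i) * (j.choose i : ZMod p)))]
          by_cases h : i0 ≤ j
          · rw [if_pos (Finset.mem_range.mpr (by omega)), if_pos h]; ring
          · rw [if_neg (fun hh => h (by simp only [Finset.mem_range] at hh; omega)),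
              if_neg h, mul_zero]
  rw [step1, Finset.sum_congr rfl (fun j hj => step2 j (Finset.mem_range.mp hj))]
  have step3 : ∑ j ∈ Finset.range p, (if i0 ≤ j then
        -((j.factorial : ZMod p)⁻¹ * (-1)^(j-i0) * (j.choose i0 : ZMod p)) else 0)
      = ∑ r ∈ Finset.range (n+1),
        -(((i0+r).factorial : ZMod p)⁻¹ * (-1)^r * ((i0+r).choose i0 : ZMod p)) := by
    rw [← Finset.sum_filter]
    have hfil : (Finset.range p).filter (fun j => i0 ≤ j) = Finset.Ico i0 p := by
      ext j
      simp only [Finset.mem_filter, Finset.mem_range, Finset.mem_Ico]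
      omega
    rw [hfil, Finset.sum_Ico_eq_sum_range, show p - i0 = n + 1 by omega]
    exact Finset.sum_congr rfl fun r _ => by rw [Nat.add_sub_cancel_left]
  rw [step3]
  have step4 : ∀ r ≤ n, ((i0+r).factorial : ZMod p)⁻¹ * ((i0+r).choose i0 : ZMod p)
      = (i0.factorial : ZMod p)⁻¹ * (r.factorial : ZMod p)⁻¹ := by
    intro r hr
    have h1 : (i0+r).choose i0 * i0.factorial * r.factorial = (i0+r).factorial := by
      have h := Nat.choose_mul_factorial_mul_factorial (Nat.le_add_right i0 r)
      rwa [Nat.add_sub_cancel_left] at h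
    have hfa : ((i0+r).factorial : ZMod p) ≠ 0 := fact_ne_zero_zmod (by omega)
    have hfb : (i0.factorial : ZMod p) ≠ 0 := fact_ne_zero_zmod (by omega)
    have hfc : (r.factorial : ZMod p) ≠ 0 := fact_ne_zero_zmod (by omega)
    have h2 : ((i0+r).choose i0 : ZMod p) * (i0.factorial : ZMod p) * (r.factorial : ZMod p)
        = ((i0+r).factorial : ZMod p) := by exact_mod_cast congrArg (Nat.cast (R := ZMod p)) h1
    field_simp
    linear_combination h2
  have step5 : ∑ r ∈ Finset.range (n+1),
        -(((i0+r).factorial : ZMod p)⁻¹ * (-1)^r * ((i0+r).choose i0 : ZMod p))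
      = -((i0.factorial : ZMod p)⁻¹ * ((n.factorial : ZMod p)⁻¹ * (numDerangements n : ZMod p))) := by
    have hterm : ∀ r ∈ Finset.range (n+1),
        -(((i0+r).factorial : ZMod p)⁻¹ * (-1)^r * ((i0+r).choose i0 : ZMod p))
        = -((i0.factorial : ZMod p)⁻¹) * ((-1)^r * (r.factorial : ZMod p)⁻¹) := by
      intro r hr
      have h4 := step4 r (by simp only [Finset.mem_range] at hr; omega)
      calc -(((i0+r).factorial : ZMod p)⁻¹ * (-1)^r * ((i0+r).choose i0 : ZMod p))
          = -(((i0+r).factorial : ZMod p)⁻¹ * ((i0+r).choose i0 : ZMod p)) * (-1)^r := by ring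
        _ = -((i0.factorial : ZMod p)⁻¹ * (r.factorial : ZMod p)⁻¹) * (-1)^r := by rw [h4]
        _ = -((i0.factorial : ZMod p)⁻¹) * ((-1)^r * (r.factorial : ZMod p)⁻¹) := by ring
    rw [Finset.sum_congr rfl hterm, ← Finset.mul_sum]
    have hfn : (n.factorial : ZMod p) ≠ 0 := fact_ne_zero_zmod (by omega)
    have hd := derangement_sum_zmod (p := p) (n := n) (by omega)
    have hsum : ∑ r ∈ Finset.range (n+1), (-1:ZMod p)^r * (r.factorial : ZMod p)⁻¹
        = (n.factorial : ZMod p)⁻¹ * (numDerangements n : ZMod p) := by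
      rw [← hd, inv_mul_cancel_left₀ hfn]
    rw [hsum]
    ring
  rw [step5]
  have hw := fact_mul_fact_zmod (p := p) n (by omega)
  rw [show p - 1 - n = i0 by omega] at hw
  have h1 : ((-1:ZMod p)^(n+1)) * ((-1:ZMod p)^(n+1)) = 1 := by
    rw [← pow_add, show (n+1)+(n+1) = 2*(n+1) by ring, pow_mul]; norm_num
  have hsign : (i0.factorial : ZMod p)⁻¹ * (n.factorial : ZMod p)⁻¹ = (-1:ZMod p)^(n+1) := by
    rw [← mul_inv, hw]
    exact inv_eq_of_mul_eq_one_left h1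
  have hmod : (m-1) % p = n := by
    have hdm : p * (m/p) + M = m := Nat.div_add_mod m p
    have h5 : m - 1 = p * (m/p) + n := by omega
    rw [h5, Nat.mul_add_mod, Nat.mod_eq_of_lt (by omega)]
  rw [neg_pow_derangements_mod (m-1), hmod]
  calc -((i0.factorial : ZMod p)⁻¹ * ((n.factorial : ZMod p)⁻¹ * (numDerangements n : ZMod p)))
      = -((i0.factorial : ZMod p)⁻¹ * (n.factorial : ZMod p)⁻¹) * (numDerangements n : ZMod p) := by
        ring
    _ = -((-1:ZMod p)^(n+1)) * (numDerangements n : ZMod p) := by rw [hsign]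
    _ = (-1:ZMod p)^n * (numDerangements n : ZMod p) := by rw [pow_succ]; ring
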